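/- Let v = (v₁, v₂, v₃, 1) ∈ ℝ^4 and let P_v(x) = x − x₄ v be the projection of ℝ^4 onto ℝ^3 × {0} in the direction of v. Let g : ℝ^3 × {0} → [−3,3] be a Lipschitz function and let r : ℝ → [0,1] be Lipschitz with Lipschitz constant 1/7. Then the 'rubber band' map R(x) = x + r(x₄) g(P_v(x)) v is a bi-Lipschitz homeomorphism of ℝ^4 onto itself, with bi-Lipschitz constant depending only on |v| and the Lipschitz constant of g. In particular, for every y ∈ ℝ^3 × {0} the function t ↦ t + r(t) g(y) is a strictly increasing bijection of ℝ. -/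

import Mathlib

noncomputable section
open MeasureTheory Set Filter
open scoped NNReal

/-- `ℝ⁴` as Euclidean space. -/
abbrev E4 : Type := EuclideanSpace ℝ (Fin 4)

/-- The projection `P_v(x) = x - x₄ v` of `ℝ⁴` onto `ℝ³ × {0}` in the direction of
`v` (where `v₄ = 1`). -/
def projV (v : E4) (x : E4) : E4 := x - x 3 • v

/-- The `rubber band` map `R(x) = x + r(x₄) g(P_v(x)) v`. -/
def rubberBand (v : E4) (g : E4 → ℝ) (r : ℝ → ℝ) (x : E4) : E4 :=
  x + (r (x 3) * g (projV v x)) • v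

lemma coord_le_norm (x : E4) (i : Fin 4) : |x i| ≤ ‖x‖ := by
  rw [EuclideanSpace.norm_eq]
  have h : |x i| = Real.sqrt (‖x i‖ ^ 2) := by
    rw [Real.sqrt_sq_eq_abs, abs_norm, Real.norm_eq_abs]
  rw [h]
  apply Real.sqrt_le_sqrt
  exact Finset.single_le_sum (f := fun j => ‖x j‖ ^ 2) (fun j _ => by positivity) (Finset.mem_univ i)

lemma band_strictMono (r : ℝ → ℝ) (hr : LipschitzWith (7⁻¹ : ℝ≥0) r) (c : ℝ)
    (hc : |c| ≤ 3) : StrictMono (fun t : ℝ => t + r t * c) := by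
  intro s t hst
  have h1 : |r t - r s| ≤ 7⁻¹ * |t - s| := by
    have := hr.dist_le_mul t s
    simpa [Real.dist_eq, NNReal.coe_inv] using this
  have h2 : |(r t - r s) * c| ≤ 7⁻¹ * |t - s| * 3 :=
    (abs_mul _ _).le.trans (mul_le_mul h1 hc (abs_nonneg _) (by positivity))
  have h3 := neg_abs_le ((r t - r s) * c)
  have h4 : |t - s| = t - s := abs_of_pos (by linarith)
  simp only
  nlinarith [h2, h3]

lemma band_bijective (r : ℝ → ℝ) (hr : LipschitzWith (7⁻¹ : ℝ≥0) r)
    (hrb : ∀ t, r t ∈ Set.Icc (0:ℝ) 1) (c : ℝ)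
    (hc : |c| ≤ 3) : Function.Bijective (fun t : ℝ => t + r t * c) := by
  constructor
  · exact (band_strictMono r hr c hc).injective
  · intro z
    have hcont : Continuous (fun t : ℝ => t + r t * c) :=
      continuous_id.add (hr.continuous.mul continuous_const)
    have hb : ∀ t, |r t * c| ≤ 3 := by
      intro t
      rcases hrb t with ⟨h0, h1⟩
      rw [abs_mul, abs_of_nonneg h0]
      nlinarith [abs_nonneg c]
    have hlow : (fun t : ℝ => t + r t * c) (z - 3) ≤ z := by
      simp only; nlinarith [abs_le.mp (hb (z-3))]
    have hhigh : z ≤ (fun t : ℝ => t + r t * c) (z + 3) := by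
      have := abs_le.mp (hb (z+3)); simp only; linarith [this.2]
    have hmem : z ∈ Set.Icc ((fun t : ℝ => t + r t * c) (z-3)) ((fun t : ℝ => t + r t * c) (z+3)) :=
      ⟨hlow, hhigh⟩
    have h34 : (z - 3 : ℝ) ≤ z + 3 := by linarith
    obtain ⟨t, _, ht⟩ := intermediate_value_Icc h34 (hcont.continuousOn) hmem
    exact ⟨t, ht⟩

lemma rb_arith (K V s t A d D q H : ℝ)
    (hK0 : 0 ≤ K) (hV0 : 0 ≤ V) (hd0 : 0 ≤ d) (hD0 : 0 ≤ D) (hA0 : 0 ≤ A)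
    (hst : |s - t| ≤ d) (hA1 : A ≤ d + |s - t| * V)
    (hq0 : 0 ≤ q)
    (hφ : q ≤ 3/7 * |s - t| + K * A)
    (hDu : D ≤ d + q * V)
    (hH : |H| ≤ D) (hA3 : A ≤ D + |H| * V)
    (hst2 : |s - t| ≤ |H| + q)
    (hd2 : d ≤ A + |s - t| * V) :
    D ≤ (1 + (3/7 + K*(1+V))*V) * d ∧ d ≤ (1 + V + V*(7/4)*(1+K*(1+V))) * D := by
  have hp0 : 0 ≤ |s - t| := abs_nonneg _
  have hh0 : 0 ≤ |H| := abs_nonneg _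
  constructor
  · have hA2 : A ≤ (1 + V) * d := by nlinarith [mul_le_mul_of_nonneg_right hst hV0]
    have hq2 : q ≤ (3/7 + K*(1+V)) * d := by
      nlinarith [mul_le_mul_of_nonneg_left hA2 hK0]
    nlinarith [mul_le_mul_of_nonneg_right hq2 hV0]
  · have hA4 : A ≤ (1 + V) * D := by nlinarith [mul_le_mul_of_nonneg_right hH hV0]
    have hp2 : |s - t| ≤ (7/4) * (1 + K*(1+V)) * D := by
      nlinarith [mul_le_mul_of_nonneg_left hA4 hK0]
    nlinarith [mul_le_mul_of_nonneg_right hp2 hV0, hA4]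

/-- The rubber band map is a bi-Lipschitz homeomorphism of `ℝ⁴`, with bi-Lipschitz
constant depending only on `|v|` and the Lipschitz constant of `g`; and along each
projection fibre, `t ↦ t + r(t) g(y)` is a strictly increasing bijection of `ℝ`. -/
theorem rubberBand_biLipschitz :
    ∃ Cf : ℝ → ℝ≥0 → ℝ, (∀ a b, 1 ≤ Cf a b) ∧
      ∀ (v : E4), v 3 = 1 →
      ∀ (g : E4 → ℝ) (Kg : ℝ≥0), LipschitzWith Kg g →
        (∀ x, g x ∈ Set.Icc (-3 : ℝ) 3) →
      ∀ r : ℝ → ℝ, LipschitzWith (7⁻¹ : ℝ≥0) r → (∀ t, r t ∈ Set.Icc (0 : ℝ) 1) →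
        Function.Bijective (rubberBand v g r) ∧
        (∀ x y : E4,
          (Cf ‖v‖ Kg)⁻¹ * dist x y ≤ dist (rubberBand v g r x) (rubberBand v g r y) ∧
          dist (rubberBand v g r x) (rubberBand v g r y) ≤ Cf ‖v‖ Kg * dist x y) ∧
        (∀ y : E4, y 3 = 0 →
          StrictMono (fun t : ℝ => t + r t * g y) ∧
          Function.Bijective (fun t : ℝ => t + r t * g y)) := by
  refine ⟨fun a b => max (1 + (3/7 + (b:ℝ)*(1+|a|)) * |a|)
      (1 + |a| + |a| * (7/4) * (1+(b:ℝ)*(1+|a|))), ?_, ?_⟩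
  · intro a b
    have h1 : (0:ℝ) ≤ (3/7 + (b:ℝ)*(1+|a|)) * |a| := by positivity
    exact le_trans (by linarith) (le_max_left _ _)
  intro v hv g Kg hg hgb r hr hrb
  beta_reduce
  set K : ℝ := (Kg : ℝ) with hK
  have hK0 : 0 ≤ K := Kg.coe_nonneg
  set V : ℝ := ‖v‖ with hVdef
  have hV0 : 0 ≤ V := norm_nonneg v
  have habsV : |V| = V := abs_of_nonneg hV0
  set C1 : ℝ := 1 + (3/7 + K*(1+V))*V with hC1
  set C2 : ℝ := 1 + V + V*(7/4)*(1+K*(1+V)) with hC2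
  have hCf : (max (1 + (3/7 + K*(1+|V|)) * |V|) (1 + |V| + |V| * (7/4) * (1+K*(1+|V|))))
      = max C1 C2 := by rw [habsV]
  have hC10 : 1 ≤ C1 := by
    rw [hC1]; nlinarith [mul_nonneg hK0 hV0, mul_nonneg (mul_nonneg hK0 hV0) hV0]
  have hC20 : 1 ≤ C2 := by
    rw [hC2]; nlinarith [mul_nonneg hK0 hV0, mul_nonneg (mul_nonneg hK0 hV0) hV0]
  have hCpos : (0:ℝ) < max C1 C2 := lt_of_lt_of_le one_pos (le_trans hC10 (le_max_left _ _))
  have hgabs : ∀ x : E4, |g x| ≤ 3 := fun x => abs_le.mpr ⟨(hgb x).1, (hgb x).2⟩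
  -- basic coordinate facts
  have hp3 : ∀ x : E4, projV v x 3 = 0 := by
    intro x
    simp [projV, PiLp.sub_apply, PiLp.smul_apply, smul_eq_mul, hv]
  -- difference formulas
  have hRsub : ∀ x y : E4, rubberBand v g r x - rubberBand v g r y =
      (x - y) + (r (x 3) * g (projV v x) - r (y 3) * g (projV v y)) • v := by
    intro x y; simp only [rubberBand]; module
  have hPsub : ∀ x y : E4, projV v x - projV v y =
      (x - y) - (x 3 - y 3) • v := by
    intro x y; simp only [projV]; module
  -- the key two-sided estimate
  have pair : ∀ x y : E4,
      (max C1 C2)⁻¹ * dist x y ≤ dist (rubberBand v g r x) (rubberBand v g r y) ∧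
      dist (rubberBand v g r x) (rubberBand v g r y) ≤ max C1 C2 * dist x y := by
    intro x y
    set s : ℝ := x 3
    set t : ℝ := y 3
    set Δφ : ℝ := r s * g (projV v x) - r t * g (projV v y) with hΔφ
    set d : ℝ := dist x y with hd
    set D : ℝ := dist (rubberBand v g r x) (rubberBand v g r y) with hD
    have hd0 : 0 ≤ d := dist_nonneg
    have hD0 : 0 ≤ D := dist_nonneg
    have hdn : d = ‖x - y‖ := dist_eq_norm x y
    have hDn : D = ‖rubberBand v g r x - rubberBand v g r y‖ := dist_eq_norm _ _
    have hst : |s - t| ≤ d := by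
      rw [hdn]
      have := coord_le_norm (x - y) 3
      simpa [PiLp.sub_apply] using this
    set A : ℝ := ‖projV v x - projV v y‖ with hA
    have hA0 : 0 ≤ A := norm_nonneg _
    have hA1 : A ≤ d + |s - t| * V := by
      rw [hA, hPsub, hdn]
      calc ‖(x - y) - (s - t) • v‖ ≤ ‖x - y‖ + ‖(s - t) • v‖ := norm_sub_le _ _
        _ = ‖x - y‖ + |s - t| * V := by rw [norm_smul, Real.norm_eq_abs]
    have hgd : |g (projV v x) - g (projV v y)| ≤ K * A := by
      have := hg.dist_le_mul (projV v x) (projV v y)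
      simpa [Real.dist_eq, dist_eq_norm, hA] using this
    have hrd : |r s - r t| ≤ 7⁻¹ * |s - t| := by
      have := hr.dist_le_mul s t
      simpa [Real.dist_eq, NNReal.coe_inv] using this
    have hφ : |Δφ| ≤ 3/7 * |s - t| + K * A := by
      have hid : Δφ = (r s - r t) * g (projV v x) + r t * (g (projV v x) - g (projV v y)) := by
        rw [hΔφ]; ring
      rw [hid]
      calc |(r s - r t) * g (projV v x) + r t * (g (projV v x) - g (projV v y))|
          ≤ |(r s - r t) * g (projV v x)| + |r t * (g (projV v x) - g (projV v y))| :=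
            abs_add_le _ _
        _ ≤ 7⁻¹ * |s - t| * 3 + 1 * (K * A) := by
            refine add_le_add ?_ ?_
            · rw [abs_mul]
              exact mul_le_mul hrd (hgabs _) (abs_nonneg _) (by positivity)
            · rw [abs_mul]
              refine mul_le_mul ?_ hgd (abs_nonneg _) one_pos.le
              rw [abs_of_nonneg (hrb t).1]; exact (hrb t).2
        _ = 3/7 * |s - t| + K * A := by ring
    -- upper bound
    have hDu : D ≤ d + |Δφ| * V := by
      rw [hDn, hRsub, hdn]
      calc ‖(x - y) + Δφ • v‖ ≤ ‖x - y‖ + ‖Δφ • v‖ := norm_add_le _ _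
        _ = ‖x - y‖ + |Δφ| * V := by rw [norm_smul, Real.norm_eq_abs]
    -- lower bound
    set H : ℝ := (s - t) + Δφ with hHdef
    have hH : |H| ≤ D := by
      rw [hDn]
      have h1 := coord_le_norm (rubberBand v g r x - rubberBand v g r y) 3
      have h2 : (rubberBand v g r x - rubberBand v g r y) 3 = H := by
        rw [hRsub]
        simp [PiLp.add_apply, PiLp.sub_apply, PiLp.smul_apply, smul_eq_mul, hv, hHdef]
        rfl
      rwa [h2] at h1
    have hRsub' : rubberBand v g r x - rubberBand v g r y =
        (projV v x - projV v y) + H • v := by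
      rw [hRsub, hPsub, hHdef]; module
    have hA3 : A ≤ D + |H| * V := by
      have : projV v x - projV v y =
          (rubberBand v g r x - rubberBand v g r y) - H • v := by
        rw [hRsub']; abel
      rw [hA, this, hDn]
      calc ‖(rubberBand v g r x - rubberBand v g r y) - H • v‖
          ≤ ‖rubberBand v g r x - rubberBand v g r y‖ + ‖H • v‖ := norm_sub_le _ _
        _ = _ + |H| * V := by rw [norm_smul, Real.norm_eq_abs]
    have hst2 : |s - t| ≤ |H| + |Δφ| := by
      have : s - t = H - Δφ := by rw [hHdef]; ring
      rw [this]; exact abs_sub _ _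
    have hd2 : d ≤ A + |s - t| * V := by
      have hxy : x - y = (projV v x - projV v y) + (s - t) • v := by
        rw [hPsub]; abel
      rw [hdn, hxy]
      calc ‖(projV v x - projV v y) + (s - t) • v‖ ≤ A + ‖(s - t) • v‖ := norm_add_le _ _
        _ = A + |s - t| * V := by rw [norm_smul, Real.norm_eq_abs]
    obtain ⟨upper, lower⟩ := rb_arith K V s t A d D |Δφ| H hK0 hV0 hd0 hD0 hA0
      hst hA1 (abs_nonneg _) hφ hDu hH hA3 hst2 hd2
    constructor
    · rw [inv_mul_le_iff₀ hCpos]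
      calc d ≤ C2 * D := by rw [hC2]; exact lower
        _ ≤ max C1 C2 * D := mul_le_mul_of_nonneg_right (le_max_right _ _) hD0
    · calc D ≤ C1 * d := by rw [hC1]; exact upper
        _ ≤ max C1 C2 * d := mul_le_mul_of_nonneg_right (le_max_left _ _) hd0
  refine ⟨?_, fun x y => by rw [hCf]; exact pair x y, ?_⟩
  · constructor
    · intro x y hxy
      have h := (pair x y).1
      rw [hxy] at h
      simp only [dist_self] at h
      have : dist x y ≤ 0 := by
        have hipos : 0 < (max C1 C2)⁻¹ := inv_pos.mpr hCpos
        nlinarith [dist_nonneg (x := x) (y := y)]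
      exact dist_le_zero.mp this
    · intro z
      set y : E4 := projV v z with hy
      obtain ⟨t₀, ht₀⟩ := (band_bijective r hr hrb (g y) (hgabs y)).2 (z 3)
      refine ⟨y + t₀ • v, ?_⟩
      have hx3 : (y + t₀ • v) 3 = t₀ := by
        simp [PiLp.add_apply, PiLp.smul_apply, smul_eq_mul, hv, hp3 z, hy]
      have hpx : projV v (y + t₀ • v) = y := by
        rw [projV, hx3]; abel
      rw [rubberBand, hx3, hpx]
      have hz : z = y + (z 3) • v := by rw [hy, projV]; abel
      simp only at ht₀
      rw [hz, ← ht₀]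
      module
  · intro y _
    exact ⟨band_strictMono r hr (g y) (hgabs y),
      band_bijective r hr hrb (g y) (hgabs y)⟩
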